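/- If (v,w) is a pair of symmetric 4×4 complex matrices satisfying the Plücker relations of G(3,6), then det v = det w. -/

import Mathlib

open Matrix

/-- The smaller element `ǐ₁` of the complement of a 2-element subset `{i₁, i₂}`
of `{1,2,3,4}` (indexed by `Fin 4`). -/
def dual₁ (i₁ i₂ : Fin 4) : Fin 4 :=
  (({i₁, i₂}ᶜ : Finset (Fin 4))).min' (by
    rw [← Finset.card_pos, Finset.card_compl]
    have h : ({i₁, i₂} : Finset (Fin 4)).card ≤ 2 :=
      (Finset.card_insert_le _ _).trans (by simp)
    simp only [Fintype.card_fin]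
    omega)

/-- The larger element `ǐ₂` of the complement of a 2-element subset `{i₁, i₂}`
of `{1,2,3,4}` (indexed by `Fin 4`). -/
def dual₂ (i₁ i₂ : Fin 4) : Fin 4 :=
  (({i₁, i₂}ᶜ : Finset (Fin 4))).max' (by
    rw [← Finset.card_pos, Finset.card_compl]
    have h : ({i₁, i₂} : Finset (Fin 4)).card ≤ 2 :=
      (Finset.card_insert_le _ _).trans (by simp)
    simp only [Fintype.card_fin]
    omega)

/-- The sign `ε(I)` of the permutation sending `(1,2,3,4)` to `(i₁,i₂,ǐ₁,ǐ₂)`,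
for `I = {i₁ < i₂}` with complement `Ǐ = {ǐ₁ < ǐ₂}`. -/
noncomputable def eps (i₁ i₂ : Fin 4) : ℂ :=
  if h : Function.Bijective ![i₁, i₂, dual₁ i₁ i₂, dual₂ i₁ i₂] then
    ((Equiv.Perm.sign (Equiv.ofBijective _ h) : ℤ) : ℂ)
  else 0

/-- The 2×2 minor `m[I,J] = m_{i₁j₁}m_{i₂j₂} − m_{i₁j₂}m_{i₂j₁}`. -/
def minor (m : Matrix (Fin 4) (Fin 4) ℂ) (i₁ i₂ j₁ j₂ : Fin 4) : ℂ :=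
  m i₁ j₁ * m i₂ j₂ - m i₁ j₂ * m i₂ j₁

/-- The pair `(v,w)` of symmetric 4×4 complex matrices satisfies the Plücker
relations of `G(3,6)` (the generators of the Plücker ideal of the embedding
`G(3,∧²V₄) ⊂ ℙ(S²V₄ ⊕ S²V₄*)` given by the double spin decomposition):
(i) `v[I,J] = ε(I)ε(J)·w[Ǐ,J̌]` for all 2-element subsets `I, J`, and
(ii) `v·w` has vanishing off-diagonal entries and equal diagonal entries. -/
structure PluckerPair (v w : Matrix (Fin 4) (Fin 4) ℂ) : Prop where
  symm_v : v.IsSymm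
  symm_w : w.IsSymm
  minor_rel : ∀ i₁ i₂ j₁ j₂ : Fin 4, i₁ < i₂ → j₁ < j₂ →
    minor v i₁ i₂ j₁ j₂ =
      eps i₁ i₂ * eps j₁ j₂ *
        minor w (dual₁ i₁ i₂) (dual₂ i₁ i₂) (dual₁ j₁ j₂) (dual₂ j₁ j₂)
  offDiag : ∀ i j : Fin 4, i ≠ j → (v * w) i j = 0
  diag : ∀ i j : Fin 4, (v * w) i i = (v * w) j j

/-- If `(v,w)` satisfies the Plücker relations of `G(3,6)`, then `det v = det w`. -/
lemma eps_01 : eps 0 1 = 1 := by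
  rw [eps, dif_pos (by decide)]; norm_cast
lemma dual1_01 : dual₁ 0 1 = 2 := by decide
lemma dual2_01 : dual₂ 0 1 = 3 := by decide
lemma eps_02 : eps 0 2 = (-1) := by
  rw [eps, dif_pos (by decide)]; norm_cast
lemma dual1_02 : dual₁ 0 2 = 1 := by decide
lemma dual2_02 : dual₂ 0 2 = 3 := by decide
lemma eps_03 : eps 0 3 = 1 := by
  rw [eps, dif_pos (by decide)]; norm_cast
lemma dual1_03 : dual₁ 0 3 = 1 := by decide
lemma dual2_03 : dual₂ 0 3 = 2 := by decide
lemma eps_12 : eps 1 2 = 1 := by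
  rw [eps, dif_pos (by decide)]; norm_cast
lemma dual1_12 : dual₁ 1 2 = 0 := by decide
lemma dual2_12 : dual₂ 1 2 = 3 := by decide
lemma eps_13 : eps 1 3 = (-1) := by
  rw [eps, dif_pos (by decide)]; norm_cast
lemma dual1_13 : dual₁ 1 3 = 0 := by decide
lemma dual2_13 : dual₂ 1 3 = 2 := by decide
lemma eps_23 : eps 2 3 = 1 := by
  rw [eps, dif_pos (by decide)]; norm_cast
lemma dual1_23 : dual₁ 2 3 = 0 := by decide
lemma dual2_23 : dual₂ 2 3 = 1 := by decide

lemma det4 (m : Matrix (Fin 4) (Fin 4) ℂ) : m.det = (m 0 0 * m 1 1 - m 0 1 * m 1 0) * (m 2 2 * m 3 3 - m 2 3 * m 3 2) - (m 0 0 * m 1 2 - m 0 2 * m 1 0) * (m 2 1 * m 3 3 - m 2 3 * m 3 1) + (m 0 0 * m 1 3 - m 0 3 * m 1 0) * (m 2 1 * m 3 2 - m 2 2 * m 3 1) + (m 0 1 * m 1 2 - m 0 2 * m 1 1) * (m 2 0 * m 3 3 - m 2 3 * m 3 0) - (m 0 1 * m 1 3 - m 0 3 * m 1 1) * (m 2 0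 * m 3 2 - m 2 2 * m 3 0) + (m 0 2 * m 1 3 - m 0 3 * m 1 2) * (m 2 0 * m 3 1 - m 2 1 * m 3 0) := by
  rw [Matrix.det_succ_row_zero]
  simp [Fin.sum_univ_succ, Matrix.det_fin_three, Fin.succAbove]
  ring

theorem det_eq_of_plucker (v w : Matrix (Fin 4) (Fin 4) ℂ) (h : PluckerPair v w) :
    v.det = w.det := by
  have hA01 := h.minor_rel 0 1 0 1 (by decide) (by decide)
  have hB01 := h.minor_rel 2 3 0 1 (by decide) (by decide)
  have hA02 := h.minor_rel 0 1 0 2 (by decide) (by decide)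
  have hB02 := h.minor_rel 2 3 0 2 (by decide) (by decide)
  have hA03 := h.minor_rel 0 1 0 3 (by decide) (by decide)
  have hB03 := h.minor_rel 2 3 0 3 (by decide) (by decide)
  have hA12 := h.minor_rel 0 1 1 2 (by decide) (by decide)
  have hB12 := h.minor_rel 2 3 1 2 (by decide) (by decide)
  have hA13 := h.minor_rel 0 1 1 3 (by decide) (by decide)
  have hB13 := h.minor_rel 2 3 1 3 (by decide) (by decide)
  have hA23 := h.minor_rel 0 1 2 3 (by decide) (by decide)
  have hB23 := h.minor_rel 2 3 2 3 (by decide) (by decide)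
  simp only [eps_01, dual1_01, dual2_01, eps_02, dual1_02, dual2_02, eps_03, dual1_03, dual2_03, eps_12, dual1_12, dual2_12, eps_13, dual1_13, dual2_13, eps_23, dual1_23, dual2_23, minor] at hA01 hB01 hA02 hB02 hA03 hB03 hA12 hB12 hA13 hB13 hA23 hB23
  rw [det4 v, det4 w]
  linear_combination (v 2 2 * v 3 3 - v 2 3 * v 3 2) * hA01 + (w 2 2 * w 3 3 - w 2 3 * w 3 2) * hB23 - (v 2 1 * v 3 3 - v 2 3 * v 3 1) * hA02 + (w 2 1 * w 3 3 - w 2 3 * w 3 1) * hB13 + (v 2 1 * v 3 2 - v 2 2 * v 3 1) * hA03 + (w 2 1 * w 3 2 - w 2 2 * w 3 1) * hB12 + (v 2 0 * v 3 3 - v 2 3 * v 3 0) * hA12 + (w 2 0 * w 3 3 - w 2 3 * w 3 0) * hB03 - (v 2 0 * v 3 2 - v 2 2 * v 3 0) * hA13 + (w 2 0 * w 3 2 - w 2 2 * w 3 0) * hB02 + (v 2 0 * v 3 1 - v 2 1 * v 3 0) * hA23 + (w 2 0 * w 3 1 - w 2 1 * w 3 0) * hB01
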